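/- Let d ≥ 2 and let γ : ℝ^{d-1} → ℝ be C¹. Fix x' ∈ ℝ^{d-1} and for x_d > γ(x') let z_x ∈ Γ_γ = {(w', γ(w')) : w' ∈ ℝ^{d-1}} be a point minimizing the distance from x = (x', x_d) to Γ_γ. Then |x_d - γ(x')| / |x - z_x| → √(1 + |∇γ(x')|²) as x_d → γ(x')⁺ (for any choice of minimizers z_x). -/

import Mathlib

open Filter

set_option maxHeartbeats 1000000

/-- The ratio of the vertical distance to the distance to the graph of a `C¹` function
converges to the surface-area element `√(1 + |∇γ(x')|²)` as the point approaches the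
graph vertically from above, for any choice of distance minimizers. -/
theorem vertical_dist_div_dist_tendsto
    {n : ℕ} (hn : 1 ≤ n)
    (γ : EuclideanSpace ℝ (Fin n) → ℝ) (hγ : ContDiff ℝ 1 γ)
    (x' : EuclideanSpace ℝ (Fin n))
    (z : ℝ → EuclideanSpace ℝ (Fin n))
    (hz : ∀ t, γ x' < t → ∀ w' : EuclideanSpace ℝ (Fin n),
      Real.sqrt (‖z t - x'‖ ^ 2 + (γ (z t) - t) ^ 2) ≤
        Real.sqrt (‖w' - x'‖ ^ 2 + (γ w' - t) ^ 2)) :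
    Tendsto (fun t : ℝ =>
        |t - γ x'| / Real.sqrt (‖z t - x'‖ ^ 2 + (γ (z t) - t) ^ 2))
      (nhdsWithin (γ x') (Set.Ioi (γ x')))
      (nhds (Real.sqrt (1 + ‖fderiv ℝ γ x'‖ ^ 2))) := by
  classical
  set g := fderiv ℝ γ x' with hgdef
  set G := ‖g‖ with hGdef
  have hG0 : 0 ≤ G := norm_nonneg _
  have hG1 : (0:ℝ) < 1 + G ^ 2 := by positivity
  set b := γ x' with hbdef
  have hd : HasFDerivAt γ g x' := (hγ.differentiable one_ne_zero x').hasFDerivAt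
  have hlo : (fun w => γ (x' + w) - γ x' - g w) =o[nhds 0] fun w => w :=
    hasFDerivAt_iff_isLittleO_nhds_zero.mp hd
  set v := (InnerProductSpace.toDual ℝ (EuclideanSpace ℝ (Fin n))).symm g with hvdef
  have hvnorm : ‖v‖ = G := LinearIsometryEquiv.norm_map _ g
  have hgv : ∀ w, g w = inner ℝ v w := fun w => (InnerProductSpace.toDual_symm_apply).symm
  -- the key quantitative limit: the squared ratio converges
  have key : Tendsto (fun t => (‖z t - x'‖ ^ 2 + (γ (z t) - t) ^ 2) / (t - b) ^ 2)
      (nhdsWithin b (Set.Ioi b)) (nhds (1 / (1 + G ^ 2))) := by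
    rw [Metric.tendsto_nhdsWithin_nhds]
    intro ε hε
    set e := min 1 (ε / (2 * (3 + 2 * (G + 1)))) with hedef
    have he0 : 0 < e := lt_min one_pos (by positivity)
    have he1 : e ≤ 1 := min_le_left _ _
    have heε : e * (2 * (3 + 2 * (G + 1))) ≤ ε := by
      have : e ≤ ε / (2 * (3 + 2 * (G + 1))) := min_le_right _ _
      rwa [le_div_iff₀ (by positivity)] at this
    have he2 : 3 * e < ε := by nlinarith
    have he3 : 2 * (G + 1) * e < ε := by nlinarith
    obtain ⟨δ₀, hδ₀, Hδ⟩ := Metric.eventually_nhds_iff.mp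
      (Asymptotics.isLittleO_iff.mp hlo he0)
    refine ⟨δ₀, hδ₀, fun t hbt hdist => ?_⟩
    have hbt' : b < t := hbt
    have hh0 : 0 < t - b := sub_pos.mpr hbt'
    have hhδ : t - b < δ₀ := by
      rw [Real.dist_eq, abs_of_pos hh0] at hdist; exact hdist
    set h := t - b with hhdef
    have hS0 : (0:ℝ) ≤ ‖z t - x'‖ ^ 2 + (γ (z t) - t) ^ 2 := by positivity
    -- minimality with test point x' : distance at most h
    have hSle : ‖z t - x'‖ ^ 2 + (γ (z t) - t) ^ 2 ≤ h ^ 2 := by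
      have h1 := hz t hbt' x'
      have h2 : ‖x' - x'‖ ^ 2 + (γ x' - t) ^ 2 = h ^ 2 := by
        simp [sub_self, hhdef]; ring
      rw [h2] at h1
      exact (Real.sqrt_le_sqrt_iff (by positivity)).mp h1
    set a := ‖z t - x'‖ with hadef
    have ha0 : 0 ≤ a := norm_nonneg _
    have hah : a ≤ h := by nlinarith [sq_nonneg (γ (z t) - t), sq_nonneg (a - h), sq_nonneg (a + h)]
    set w := z t - x' with hwdef
    have hzw : z t = x' + w := by rw [hwdef]; abel
    have hθ : |γ (z t) - b - g w| ≤ e * a := by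
      have hwd : dist w 0 < δ₀ := by
        rw [dist_zero_right]; exact lt_of_le_of_lt hah hhδ
      have := Hδ hwd
      rw [← hzw] at this
      simpa [Real.norm_eq_abs, hadef, hbdef] using this
    have hgw : |g w| ≤ G * a := by
      simpa [Real.norm_eq_abs, hadef] using g.le_opNorm w
    set c := g w with hcdef
    set θ := γ (z t) - b - c with hθdef
    have hdecomp : γ (z t) - t = c - h + θ := by rw [hθdef, hhdef]; ring
    have hcle := abs_le.mp hgw
    have hθle := abs_le.mp hθ
    have hGah : G * a ≤ G * h := mul_le_mul_of_nonneg_left hah hG0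
    -- lower bound for the squared distance
    have hlow : h ^ 2 / (1 + G ^ 2) - 2 * (G + 1) * e * h ^ 2
        ≤ a ^ 2 + (γ (z t) - t) ^ 2 := by
      have h1 : h ^ 2 / (1 + G ^ 2) ≤ a ^ 2 + (c - h) ^ 2 := by
        rw [div_le_iff₀ hG1]
        have hX : h ≤ G * a + (h - c) := by linarith
        have hX0 : (0:ℝ) ≤ G * a + (h - c) := le_trans hh0.le hX
        linarith [sq_nonneg (a - G * (h - c)), mul_le_mul hX hX hh0.le hX0]
      have hcG : |c| ≤ G * h := le_trans hgw hGah
      have hch : |c - h| ≤ (G + 1) * h := by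
        rw [abs_le] at hcG ⊢
        constructor <;> [linarith; linarith]
      have hθh : |θ| ≤ e * h :=
        le_trans hθ (mul_le_mul_of_nonneg_left hah he0.le)
      have h2 : |(c - h) * θ| ≤ (G + 1) * h * (e * h) := by
        rw [abs_mul]
        exact mul_le_mul hch hθh (abs_nonneg _) (by positivity)
      have h3 := (abs_le.mp h2).1
      rw [hdecomp]
      have hexp : a ^ 2 + (c - h + θ) ^ 2
          = a ^ 2 + (c - h) ^ 2 + 2 * ((c - h) * θ) + θ ^ 2 := by ring
      rw [hexp]
      clear_value G e h a c θ
      linarith [h1, h3, sq_nonneg θ]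
    -- upper bound via the test point x' + (h/(1+G²)) • v
    have hup : a ^ 2 + (γ (z t) - t) ^ 2 ≤ h ^ 2 / (1 + G ^ 2) + 3 * e * h ^ 2 := by
      set u := h / (1 + G ^ 2) with hudef
      have hu0 : 0 < u := by positivity
      have hu : u * (1 + G ^ 2) = h := by rw [hudef]; field_simp
      have huh : u ≤ h := by nlinarith [sq_nonneg G]
      set w' := x' + u • v with hw'def
      have hw'x : w' - x' = u • v := by rw [hw'def]; abel
      have hnw' : ‖w' - x'‖ = u * G := by
        rw [hw'x, norm_smul, hvnorm, Real.norm_eq_abs, abs_of_pos hu0]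
      have hgw' : g (w' - x') = u * G ^ 2 := by
        rw [hw'x, hgv, real_inner_smul_right, real_inner_self_eq_norm_sq, hvnorm]
      have huGh : u * G ≤ h := by nlinarith
      have hθ' : |γ w' - b - g (w' - x')| ≤ e * (u * G) := by
        have hwd : dist (w' - x') 0 < δ₀ := by
          rw [dist_zero_right, hnw']
          exact lt_of_le_of_lt huGh hhδ
        have := Hδ hwd
        have hxw : x' + (w' - x') = w' := by abel
        rw [hxw] at this
        simpa [Real.norm_eq_abs, hnw', hbdef] using this
      set θ' := γ w' - b - g (w' - x') with hθ'def
      have hγw' : γ w' - t = u * G ^ 2 - h + θ' := by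
        rw [hθ'def, hgw', hhdef]; ring
      have hmin := hz t hbt' w'
      have hTle : a ^ 2 + (γ (z t) - t) ^ 2 ≤ ‖w' - x'‖ ^ 2 + (γ w' - t) ^ 2 :=
        (Real.sqrt_le_sqrt_iff (by positivity)).mp hmin
      rw [hnw', hγw'] at hTle
      have hsub : u * G ^ 2 - h = -u := by linarith [hu]
      rw [hsub] at hTle
      have hθ'le := abs_le.mp hθ'
      have hdiv : h ^ 2 / (1 + G ^ 2) = u * h := by rw [hudef]; ring
      rw [hdiv]
      have huG0 : 0 ≤ u * G := by positivity
      have hA : u * (-θ') ≤ u * (e * (u * G)) :=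
        mul_le_mul_of_nonneg_left (by linarith [hθ'le.1]) hu0.le
      have hB : u * (u * G) ≤ h * h := mul_le_mul huh huGh huG0 hh0.le
      have hC : e * (u * (u * G)) ≤ e * (h * h) :=
        mul_le_mul_of_nonneg_left hB he0.le
      have hDq : θ' ^ 2 ≤ (e * (u * G)) ^ 2 := sq_le_sq' hθ'le.1 hθ'le.2
      have hE1 : e * e ≤ e := mul_le_of_le_one_left he0.le he1
      have hE2 : (u * G) * (u * G) ≤ h * h := mul_le_mul huGh huGh huG0 hh0.le
      have hE : (e * (u * G)) ^ 2 ≤ e * (h * h) := by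
        calc (e * (u * G)) ^ 2 = (e * e) * ((u * G) * (u * G)) := by ring
          _ ≤ e * (h * h) :=
            mul_le_mul hE1 hE2 (by positivity) he0.le
      have hD : θ' ^ 2 ≤ e * (h * h) := le_trans hDq hE
      have hvv : u * (u * (1 + G ^ 2)) = u * h := by rw [hu]
      have hexp : (u * G) ^ 2 + (-u + θ') ^ 2
          = u * (u * (1 + G ^ 2)) + 2 * (u * (-θ')) + θ' ^ 2 := by ring
      rw [hexp] at hTle
      clear_value G e h a u θ'
      linarith [hTle, hA, hC, hD, hvv]
    -- conclude the ε-bound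
    have hh2 : (0:ℝ) < h ^ 2 := by positivity
    rw [Real.dist_eq]
    have hql : 1 / (1 + G ^ 2) - 2 * (G + 1) * e ≤
        (a ^ 2 + (γ (z t) - t) ^ 2) / h ^ 2 := by
      rw [le_div_iff₀ hh2]
      calc (1 / (1 + G ^ 2) - 2 * (G + 1) * e) * h ^ 2
          = h ^ 2 / (1 + G ^ 2) - 2 * (G + 1) * e * h ^ 2 := by ring
        _ ≤ _ := hlow
    have hqu : (a ^ 2 + (γ (z t) - t) ^ 2) / h ^ 2 ≤ 1 / (1 + G ^ 2) + 3 * e := by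
      rw [div_le_iff₀ hh2]
      calc a ^ 2 + (γ (z t) - t) ^ 2 ≤ h ^ 2 / (1 + G ^ 2) + 3 * e * h ^ 2 := hup
        _ = (1 / (1 + G ^ 2) + 3 * e) * h ^ 2 := by ring
    rw [abs_lt]
    constructor <;> [linarith; linarith]
  -- assemble the limit of the ratio itself
  have hL : (0:ℝ) < 1 / (1 + G ^ 2) := by positivity
  have key2 : Tendsto (fun t => ((‖z t - x'‖ ^ 2 + (γ (z t) - t) ^ 2) / (t - b) ^ 2)⁻¹)
      (nhdsWithin b (Set.Ioi b)) (nhds (1 + G ^ 2)) := by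
    have := key.inv₀ (ne_of_gt hL)
    simpa [one_div] using this
  have key3 : Tendsto
      (fun t => Real.sqrt (((‖z t - x'‖ ^ 2 + (γ (z t) - t) ^ 2) / (t - b) ^ 2)⁻¹))
      (nhdsWithin b (Set.Ioi b)) (nhds (Real.sqrt (1 + G ^ 2))) :=
    (Real.continuous_sqrt.tendsto _).comp key2
  have hev : (fun t => Real.sqrt (((‖z t - x'‖ ^ 2 + (γ (z t) - t) ^ 2) / (t - b) ^ 2)⁻¹))
      =ᶠ[nhdsWithin b (Set.Ioi b)]
      (fun t : ℝ => |t - b| / Real.sqrt (‖z t - x'‖ ^ 2 + (γ (z t) - t) ^ 2)) := by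
    filter_upwards [self_mem_nhdsWithin, key.eventually (lt_mem_nhds hL)] with t ht hQt
    rw [inv_div, Real.sqrt_div (sq_nonneg _), Real.sqrt_sq_eq_abs]
  exact key3.congr' hev
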